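/- On the 6-dimensional real nilpotent Lie algebra g with basis X₁,…,X₆ and nonzero brackets [X₁,X₃]=X₅, [X₁,X₄]=X₆, [X₂,X₃]=X₆, [X₂,X₄]=-X₅, the linear maps J₁ (X₁↦X₂, X₂↦-X₁, X₃↦X₄, X₄↦-X₃, X₅↦X₆, X₆↦-X₅) and J₂ (X₁↦X₂+X₆, X₂↦-X₁+X₅, X₃↦X₄, X₄↦-X₃, X₅↦X₆, X₆↦-X₅) are both bi-invariant complex structures, and J₁∘J₂ ≠ J₂∘J₁. Consequently there is no inner product on g making both J₁ and J₂ orthogonal. -/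

import Mathlib

section aux
variable {g : Type*} [LieRing g] [LieAlgebra ℝ g]
attribute [local instance 100] LieRing.ofAssociativeRing

/-- Extend a basis bracket identity bilinearly. -/
lemma biinv_of_basis (X : Module.Basis (Fin 6) ℝ g) (J : g →ₗ[ℝ] g)
    (h : ∀ i j, J ⁅X i, X j⁆ = ⁅J (X i), X j⁆) :
    ∀ x y : g, J ⁅x, y⁆ = ⁅J x, y⁆ := by
  let ad : g →ₗ[ℝ] Module.End ℝ g := (LieAlgebra.ad ℝ g : g →ₗ⁅ℝ⁆ Module.End ℝ g)
  have key : (LinearMap.llcomp ℝ g g g J).comp ad = ad.comp J := by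
    apply LinearMap.ext_basis X X
    intro i j
    simpa [ad, LieAlgebra.ad_apply] using h i j
  intro x y
  have := LinearMap.congr_fun (LinearMap.congr_fun key x) y
  simpa [ad, LieAlgebra.ad_apply] using this
end aux

theorem stmt17 (g : Type*) [LieRing g] [LieAlgebra ℝ g]
    (X : Module.Basis (Fin 6) ℝ g)
    (h13 : ⁅X 0, X 2⁆ = X 4) (h14 : ⁅X 0, X 3⁆ = X 5)
    (h23 : ⁅X 1, X 2⁆ = X 5) (h24 : ⁅X 1, X 3⁆ = -X 4)
    (h12 : ⁅X 0, X 1⁆ = 0) (h34 : ⁅X 2, X 3⁆ = 0)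
    (hc : ∀ i j : Fin 6, 4 ≤ (j : ℕ) → ⁅X i, X j⁆ = 0)
    (J₁ J₂ : g →ₗ[ℝ] g)
    (hJ₁ : J₁ (X 0) = X 1 ∧ J₁ (X 1) = -X 0 ∧ J₁ (X 2) = X 3 ∧ J₁ (X 3) = -X 2 ∧
      J₁ (X 4) = X 5 ∧ J₁ (X 5) = -X 4)
    (hJ₂ : J₂ (X 0) = X 1 + X 5 ∧ J₂ (X 1) = -X 0 + X 4 ∧ J₂ (X 2) = X 3 ∧
      J₂ (X 3) = -X 2 ∧ J₂ (X 4) = X 5 ∧ J₂ (X 5) = -X 4) :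
    ((∀ x : g, J₁ (J₁ x) = -x) ∧ ∀ x y : g, J₁ ⁅x, y⁆ = ⁅J₁ x, y⁆) ∧
    ((∀ x : g, J₂ (J₂ x) = -x) ∧ ∀ x y : g, J₂ ⁅x, y⁆ = ⁅J₂ x, y⁆) ∧
    J₁ ∘ₗ J₂ ≠ J₂ ∘ₗ J₁ ∧
    ¬ ∃ B : g →ₗ[ℝ] g →ₗ[ℝ] ℝ, (∀ x y : g, B x y = B y x) ∧
        (∀ x : g, x ≠ 0 → 0 < B x x) ∧
        (∀ x y : g, B (J₁ x) (J₁ y) = B x y) ∧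
        (∀ x y : g, B (J₂ x) (J₂ y) = B x y) := by
  obtain ⟨a1, a2, a3, a4, a5, a6⟩ := hJ₁
  obtain ⟨b1, b2, b3, b4, b5, b6⟩ := hJ₂
  -- reversed/zero brackets
  have h21 : ⁅X 1, X 0⁆ = 0 := by rw [← lie_skew, h12, neg_zero]
  have h31 : ⁅X 2, X 0⁆ = -X 4 := by rw [← lie_skew, h13]
  have h41 : ⁅X 3, X 0⁆ = -X 5 := by rw [← lie_skew, h14]
  have h32 : ⁅X 2, X 1⁆ = -X 5 := by rw [← lie_skew, h23]
  have h42 : ⁅X 3, X 1⁆ = X 4 := by rw [← lie_skew, h24, neg_neg]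
  have h43 : ⁅X 3, X 2⁆ = 0 := by rw [← lie_skew, h34, neg_zero]
  have hr4 : ∀ i : Fin 6, ⁅X i, X 4⁆ = 0 := fun i => hc i 4 (by decide)
  have hr5 : ∀ i : Fin 6, ⁅X i, X 5⁆ = 0 := fun i => hc i 5 (by decide)
  have hl4 : ∀ j : Fin 6, ⁅X 4, X j⁆ = 0 := fun j => by
    rw [← lie_skew, hc j 4 (by decide), neg_zero]
  have hl5 : ∀ j : Fin 6, ⁅X 5, X j⁆ = 0 := fun j => by
    rw [← lie_skew, hc j 5 (by decide), neg_zero]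
  have hsq₁ : ∀ x : g, J₁ (J₁ x) = -x := by
    have : J₁ ∘ₗ J₁ = -LinearMap.id := by
      apply X.ext
      intro i
      fin_cases i <;>
        simp [a1, a2, a3, a4, a5, a6]
    intro x
    simpa using LinearMap.congr_fun this x
  have hsq₂ : ∀ x : g, J₂ (J₂ x) = -x := by
    have : J₂ ∘ₗ J₂ = -LinearMap.id := by
      apply X.ext
      intro i
      fin_cases i <;>
        simp [b1, b2, b3, b4, b5, b6]
    intro x
    simpa using LinearMap.congr_fun this x
  have hbi₁ : ∀ x y : g, J₁ ⁅x, y⁆ = ⁅J₁ x, y⁆ := by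
    apply biinv_of_basis X
    intro i j
    fin_cases i <;> fin_cases j <;>
      simp [a1, a2, a3, a4, a5, a6, h13, h14, h23, h24, h12, h34,
        h21, h31, h41, h32, h42, h43, hr4, hr5, hl4, hl5]
  have hbi₂ : ∀ x y : g, J₂ ⁅x, y⁆ = ⁅J₂ x, y⁆ := by
    apply biinv_of_basis X
    intro i j
    fin_cases i <;> fin_cases j <;>
      simp [b1, b2, b3, b4, b5, b6, h13, h14, h23, h24, h12, h34,
        h21, h31, h41, h32, h42, h43, hr4, hr5, hl4, hl5]
  have hX4 : X 4 ≠ 0 := X.ne_zero 4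
  refine ⟨⟨hsq₁, hbi₁⟩, ⟨hsq₂, hbi₂⟩, ?_, ?_⟩
  · intro h
    have h0 := LinearMap.congr_fun h (X 0)
    simp only [LinearMap.comp_apply, b1, a1] at h0
    rw [map_add, a2, a6, b2] at h0
    -- h0 : -X 0 + -X 4 = -X 0 + X 4
    have : X 4 = 0 := by
      have h2 : (2 : ℝ) • X 4 = 0 := by
        have := add_left_cancel h0
        rw [two_smul]
        linear_combination (norm := module) -this
      simpa using h2
    exact hX4 this
  · rintro ⟨B, hsym, hpos, hB1, hB2⟩
    have k1 : B (X 0) (X 4) = B (X 1) (X 5) := by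
      have := hB1 (X 1) (X 5)
      rw [a2, a6] at this
      simpa using this
    have k2 : B (X 1) (X 1) = B (X 0) (X 0) := by
      have := hB1 (X 0) (X 0); rw [a1] at this; exact this
    have k3 := hB2 (X 0) (X 0)
    rw [b1] at k3
    have k4 := hB2 (X 1) (X 1)
    rw [b2] at k4
    simp only [map_add, map_neg, LinearMap.add_apply, LinearMap.neg_apply] at k3 k4
    have s1 : B (X 5) (X 1) = B (X 1) (X 5) := hsym _ _
    have s2 : B (X 4) (X 0) = B (X 0) (X 4) := hsym _ _
    have p4 := hpos (X 4) hX4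
    have p5 := hpos (X 5) (X.ne_zero 5)
    linarith
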